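/- For every u⃗ in the cone K⃗ = {a·v⃗_0 + b·v⃗_1 : a,b ≥ 0, (a,b)≠(0,0)}, every i ∈ {0,1}, and every n ∈ ℕ, one has ‖M_i^n·u⃗‖₂ ≥ (1/2)·(3/5)^n·‖u⃗‖₂. -/
import Mathlib


noncomputable def M0 : Matrix (Fin 3) (Fin 3) ℝ :=
  (1/5 : ℝ) • !![5, 2, 2; 0, 2, 1; 0, 1, 2]

noncomputable def M1 : Matrix (Fin 3) (Fin 3) ℝ :=
  (1/5 : ℝ) • !![2, 0, 1; 2, 5, 2; 1, 0, 2]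

noncomputable def v0 : Fin 3 → ℝ := ![-1, 1/2, 1/2]
noncomputable def v1 : Fin 3 → ℝ := ![-1/2, 1, -1/2]

noncomputable def Kvec : Set (Fin 3 → ℝ) :=
  {u | ∃ a b : ℝ, 0 ≤ a ∧ 0 ≤ b ∧ (a, b) ≠ (0, 0) ∧ u = a • v0 + b • v1}

/-- Euclidean norm on ℝ³. -/
noncomputable def norm2 (v : Fin 3 → ℝ) : ℝ :=
  Real.sqrt (v 0 ^ 2 + v 1 ^ 2 + v 2 ^ 2)

lemma M0v0 : M0.mulVec v0 = (3/5 : ℝ) • v0 := by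
  funext i; fin_cases i <;>
    simp [M0, v0, Matrix.mulVec, dotProduct, Fin.sum_univ_three] <;> norm_num

lemma M0v1 : M0.mulVec v1 = (1/5 : ℝ) • v0 + (1/5 : ℝ) • v1 := by
  funext i; fin_cases i <;>
    simp [M0, v0, v1, Matrix.mulVec, dotProduct, Fin.sum_univ_three] <;> norm_num

lemma M1v1 : M1.mulVec v1 = (3/5 : ℝ) • v1 := by
  funext i; fin_cases i <;>
    simp [M1, v1, Matrix.mulVec, dotProduct, Fin.sum_univ_three] <;> norm_num

lemma M1v0 : M1.mulVec v0 = (1/5 : ℝ) • v0 + (1/5 : ℝ) • v1 := by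
  funext i; fin_cases i <;>
    simp [M1, v0, v1, Matrix.mulVec, dotProduct, Fin.sum_univ_three] <;> norm_num

lemma mulVec_comb (M : Matrix (Fin 3) (Fin 3) ℝ) (a b : ℝ) (x y : Fin 3 → ℝ) :
    M.mulVec (a • x + b • y) = a • M.mulVec x + b • M.mulVec y := by
  rw [Matrix.mulVec_add, Matrix.mulVec_smul, Matrix.mulVec_smul]

lemma pow_formula0 (n : ℕ) (a b : ℝ) :
    (M0 ^ n).mulVec (a • v0 + b • v1) =
      ((3/5:ℝ)^n * a + ((3/5:ℝ)^n - (1/5:ℝ)^n)/2 * b) • v0 + ((1/5:ℝ)^n * b) • v1 := by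
  induction n generalizing a b with
  | zero => simp
  | succ n ih =>
      rw [pow_succ, ← Matrix.mulVec_mulVec, mulVec_comb, M0v0, M0v1]
      have : a • ((3/5:ℝ) • v0) + b • ((1/5:ℝ) • v0 + (1/5:ℝ) • v1)
          = ((3/5)*a + (1/5)*b) • v0 + ((1/5)*b) • v1 := by
        simp [smul_add, smul_smul, add_smul]; module
      rw [this, ih]
      congr 1 <;> [skip; skip] <;> congr 1 <;> ring

lemma pow_formula1 (n : ℕ) (a b : ℝ) :
    (M1 ^ n).mulVec (a • v0 + b • v1) =
      ((1/5:ℝ)^n * a) • v0 + ((3/5:ℝ)^n * b + ((3/5:ℝ)^n - (1/5:ℝ)^n)/2 * a) • v1 := by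
  induction n generalizing a b with
  | zero => simp
  | succ n ih =>
      rw [pow_succ, ← Matrix.mulVec_mulVec, mulVec_comb, M1v0, M1v1]
      have : a • ((1/5:ℝ) • v0 + (1/5:ℝ) • v1) + b • ((3/5:ℝ) • v1)
          = ((1/5)*a) • v0 + ((3/5)*b + (1/5)*a) • v1 := by
        simp [smul_add, smul_smul, add_smul]; module
      rw [this, ih]
      congr 1 <;> [skip; skip] <;> congr 1 <;> ring

lemma norm2_comb (a b : ℝ) :
    norm2 (a • v0 + b • v1) = Real.sqrt ((3/2) * (a^2 + a*b + b^2)) := by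
  unfold norm2
  congr 1
  simp [v0, v1]
  ring

lemma key_ineq (a b : ℝ) (ha : 0 ≤ a) (hb : 0 ≤ b) (n : ℕ) (A B : ℝ)
    (hA : A = (3/5:ℝ)^n * a + ((3/5:ℝ)^n - (1/5:ℝ)^n)/2 * b) (hB : B = (1/5:ℝ)^n * b) :
    Real.sqrt ((3/2) * (A^2 + A*B + B^2)) ≥
      (1/2 : ℝ) * (3/5 : ℝ)^n * Real.sqrt ((3/2) * (a^2 + a*b + b^2)) := by
  set p : ℝ := (3/5:ℝ)^n with hp
  set r : ℝ := (1/5:ℝ)^n with hr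
  have hp0 : (0:ℝ) ≤ p := by positivity
  have hr0 : (0:ℝ) ≤ r := by positivity
  have hc : (0:ℝ) ≤ 1/2 * p := by positivity
  have h1 : (1/2 * p) * Real.sqrt ((3/2) * (a^2 + a*b + b^2))
      = Real.sqrt ((1/2*p)^2 * ((3/2) * (a^2 + a*b + b^2))) := by
    rw [Real.sqrt_mul (sq_nonneg _), Real.sqrt_sq hc]
  rw [ge_iff_le, h1]
  apply Real.sqrt_le_sqrt
  subst hA hB
  nlinarith [mul_nonneg (sq_nonneg p) (mul_nonneg ha hb), sq_nonneg (p*a), sq_nonneg (r*b)]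

theorem stmt_13 (u : Fin 3 → ℝ) (hu : u ∈ Kvec) (M : Matrix (Fin 3) (Fin 3) ℝ)
    (hM : M = M0 ∨ M = M1) (n : ℕ) :
    norm2 ((M ^ n).mulVec u) ≥ (1/2 : ℝ) * (3/5 : ℝ) ^ n * norm2 u := by
  obtain ⟨a, b, ha, hb, -, rfl⟩ := hu
  rcases hM with rfl | rfl
  · rw [pow_formula0, norm2_comb, norm2_comb]
    exact key_ineq a b ha hb n _ _ rfl rfl
  · rw [pow_formula1, norm2_comb, norm2_comb]
    have h := key_ineq b a hb ha n _ _ rfl rfl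
    calc Real.sqrt ((3/2) * (((1/5:ℝ)^n * a)^2 + ((1/5:ℝ)^n * a) * ((3/5:ℝ)^n * b + ((3/5:ℝ)^n - (1/5:ℝ)^n)/2 * a) + ((3/5:ℝ)^n * b + ((3/5:ℝ)^n - (1/5:ℝ)^n)/2 * a)^2))
        = Real.sqrt ((3/2) * (((3/5:ℝ)^n * b + ((3/5:ℝ)^n - (1/5:ℝ)^n)/2 * a)^2 + ((3/5:ℝ)^n * b + ((3/5:ℝ)^n - (1/5:ℝ)^n)/2 * a) * ((1/5:ℝ)^n * a) + ((1/5:ℝ)^n * a)^2)) := by ring_nf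
      _ ≥ (1/2 : ℝ) * (3/5 : ℝ)^n * Real.sqrt ((3/2) * (b^2 + b*a + a^2)) := h
      _ = (1/2 : ℝ) * (3/5 : ℝ)^n * Real.sqrt ((3/2) * (a^2 + a*b + b^2)) := by ring_nf
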